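/- Averaged nonconvex rate extraction: if nonnegative sequences A_r, C_r and real B_r bounded below by B* satisfy A_r ≤ (4/(ηN))(B_r − B_{r+1}) + (16L²/N)C_r and C_r ≤ (1 − q/3)C_{r−1} + γ A_r with C_{−1} = C_0 = 0, and (16L²/N)·(3γ/q) ≤ 1/2, then (1/R)∑_{r=0}^{R−1} A_r ≤ 8(B_0 − B*)/(ηNR). -/
import Mathlib


/-- Averaged nonconvex rate extraction: if A_r ≤ (4/(ηN))(B_r − B_{r+1}) + (16L²/N)C_r
and C_{r+1} ≤ (1 − q/3)C_r + γA_{r+1} with C_0 = 0, B_r ≥ B*, A, C ≥ 0, and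
96L²γ/(Nq) ≤ 1/2, then (1/R)∑_{r=0}^{R−1} A_r ≤ 8(B_0 − B*)/(ηNR). -/
theorem averaged_nonconvex_rate (A C : ℕ → ℝ) (B : ℕ → ℝ) (Bstar : ℝ)
    (η N L q γ : ℝ) (hη : 0 < η) (hN : 0 < N) (hL : 0 < L)
    (hq0 : 0 < q) (hq1 : q ≤ 1) (hγ : 0 < γ)
    (hcond : 96 * L ^ 2 * γ / (N * q) ≤ 1 / 2)
    (hA : ∀ r, 0 ≤ A r) (hC : ∀ r, 0 ≤ C r)
    (hB : ∀ r, Bstar ≤ B r)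
    (hC0 : C 0 = 0)
    (hArec : ∀ r, A r ≤ 4 / (η * N) * (B r - B (r + 1)) + 16 * L ^ 2 / N * C r)
    (hCrec : ∀ r, C (r + 1) ≤ (1 - q / 3) * C r + γ * A (r + 1))
    (R : ℕ) (hR : 0 < R) :
    (1 / (R : ℝ)) * ∑ r ∈ Finset.range R, A r ≤ 8 * (B 0 - Bstar) / (η * N * R) := by
  obtain ⟨n, rfl⟩ : ∃ n, R = n + 1 := ⟨R - 1, (Nat.succ_pred_eq_of_pos hR).symm⟩
  set SA := ∑ r ∈ Finset.range (n + 1), A r with hSA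
  set SC := ∑ r ∈ Finset.range (n + 1), C r with hSC
  have hSAnn : 0 ≤ SA := Finset.sum_nonneg fun i _ => hA i
  have hSCnn : 0 ≤ SC := Finset.sum_nonneg fun i _ => hC i
  have hq3 : 0 ≤ 1 - q / 3 := by linarith
  have hclaim1 : q / 3 * SC ≤ γ * SA := by
    have h1 : ∑ r ∈ Finset.range n, C (r + 1)
        ≤ (1 - q / 3) * ∑ r ∈ Finset.range n, C r
          + γ * ∑ r ∈ Finset.range n, A (r + 1) := by
      rw [Finset.mul_sum, Finset.mul_sum, ← Finset.sum_add_distrib]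
      exact Finset.sum_le_sum fun i _ => hCrec i
    have h2 : SC = ∑ r ∈ Finset.range n, C (r + 1) := by
      rw [hSC, Finset.sum_range_succ' C n, hC0, add_zero]
    have h3 : ∑ r ∈ Finset.range n, C r ≤ SC := by
      rw [hSC, Finset.sum_range_succ]
      nlinarith [hC n]
    have h4 : ∑ r ∈ Finset.range n, A (r + 1) ≤ SA := by
      rw [hSA, Finset.sum_range_succ' A n]
      nlinarith [hA 0]
    have h5 : (1 - q / 3) * ∑ r ∈ Finset.range n, C r ≤ (1 - q / 3) * SC :=
      mul_le_mul_of_nonneg_left h3 hq3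
    have h6 : γ * ∑ r ∈ Finset.range n, A (r + 1) ≤ γ * SA :=
      mul_le_mul_of_nonneg_left h4 hγ.le
    nlinarith [h1, h2, h5, h6]
  have hclaim2 : SA ≤ 4 / (η * N) * (B 0 - B (n + 1)) + 16 * L ^ 2 / N * SC := by
    have h1 : SA ≤ ∑ r ∈ Finset.range (n + 1),
        (4 / (η * N) * (B r - B (r + 1)) + 16 * L ^ 2 / N * C r) :=
      Finset.sum_le_sum fun i _ => hArec i
    have h2 : ∑ r ∈ Finset.range (n + 1), (B r - B (r + 1)) = B 0 - B (n + 1) :=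
      Finset.sum_range_sub' B (n + 1)
    calc SA ≤ _ := h1
      _ = 4 / (η * N) * (B 0 - B (n + 1)) + 16 * L ^ 2 / N * SC := by
          rw [Finset.sum_add_distrib, ← Finset.mul_sum, ← Finset.mul_sum, h2]
  have hBtop : B 0 - B (n + 1) ≤ B 0 - Bstar := by linarith [hB (n + 1)]
  have hB0 : 0 ≤ B 0 - Bstar := by linarith [hB 0]
  have hkey : 16 * L ^ 2 / N * SC ≤ 1 / 2 * SA := by
    have hc : 96 * L ^ 2 * γ ≤ 1 / 2 * (N * q) := by
      rw [div_le_iff₀ (by positivity)] at hcond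
      linarith
    rw [div_mul_eq_mul_div, div_le_iff₀ hN]
    -- goal: 16 * L ^ 2 * SC ≤ 1 / 2 * SA * N
    -- from hclaim1: q * SC ≤ 3 γ SA; multiply by 16 L² / q : 16 L² SC ≤ 48 L² γ SA / q
    -- and 48 L² γ ≤ N q / 4 ⇒ 48 L² γ SA ≤ N q SA / 4 ⇒ 16 L² SC ≤ N SA / 4 ≤ N SA / 2
    have h7 : 16 * L ^ 2 * (q / 3 * SC) ≤ 16 * L ^ 2 * (γ * SA) :=
      mul_le_mul_of_nonneg_left hclaim1 (by positivity)
    have h8 : 96 * L ^ 2 * γ * SA ≤ 1 / 2 * (N * q) * SA :=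
      mul_le_mul_of_nonneg_right hc hSAnn
    have h9 : 16 * L ^ 2 * q * SC ≤ 1 / 4 * (N * q) * SA := by nlinarith [h7, h8]
    nlinarith [h9, hq0, mul_nonneg (mul_nonneg hN.le hq0.le) hSAnn]
  have hfrac : 4 / (η * N) * (B 0 - B (n + 1)) ≤ 4 / (η * N) * (B 0 - Bstar) :=
    mul_le_mul_of_nonneg_left hBtop (by positivity)
  have hSAbound : SA ≤ 8 / (η * N) * (B 0 - Bstar) := by
    have hd : 8 / (η * N) * (B 0 - Bstar) = 2 * (4 / (η * N) * (B 0 - Bstar)) := by ring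
    rw [hd]; linarith [hclaim2, hfrac, hkey]
  have hRpos : (0:ℝ) < ((n:ℝ) + 1) := by positivity
  have hcast : ((n + 1 : ℕ) : ℝ) = (n : ℝ) + 1 := by push_cast; ring
  rw [hcast]
  have hηN : (0:ℝ) < η * N := mul_pos hη hN
  have h10 : SA * (η * N) ≤ 8 * (B 0 - Bstar) := by
    have h := mul_le_mul_of_nonneg_right hSAbound hηN.le
    have he2 : 8 / (η * N) * (B 0 - Bstar) * (η * N) = 8 * (B 0 - Bstar) := by
      field_simp
    linarith [h, he2]
  rw [one_div, inv_mul_eq_div, div_le_div_iff₀ hRpos (by positivity)]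
  have h11 := mul_le_mul_of_nonneg_right h10 hRpos.le
  have he : SA * (η * N * ((n:ℝ) + 1)) = SA * (η * N) * ((n:ℝ) + 1) := by ring
  linarith [h11]
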